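/- Let A be a unital C*-algebra and let ε : A → ℂ be a character. Let u : A → ℂ be a non-zero bounded linear functional such that u(1) = 0 and u(x*x) is a nonnegative real number for every x ∈ A with ε(x*x) = 0. Then there exist a real number r > 0 and a state v on A such that u = r·(v − ε). -/

import Mathlib

open scoped ComplexOrder

private lemma aux_le_zero_of_le_sqrt {d K : ℝ} (h : ∀ s : ℝ, 0 < s → d ≤ K * Real.sqrt s) :
    d ≤ 0 := by
  by_contra hd
  push_neg at hd
  rcases le_or_gt K 0 with hK | hK
  · have h1 := h 1 one_pos
    simp only [Real.sqrt_one, mul_one] at h1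
    linarith
  · have hs : (0:ℝ) < (d / (2 * K)) ^ 2 := by positivity
    have h1 := h _ hs
    rw [Real.sqrt_sq (by positivity)] at h1
    have : K * (d / (2 * K)) = d / 2 := by field_simp
    rw [this] at h1
    linarith

private lemma aux_herm {A : Type*} [CStarAlgebra A]
    (ε : A →⋆ₐ[ℂ] ℂ) (u : A →L[ℂ] ℂ)
    (pos : ∀ x : A, ε x = 0 → 0 ≤ u (star x * x)) :
    ∀ a b : A, ε a = 0 → ε b = 0 → u (star b * a) = (starRingEnd ℂ) (u (star a * b)) := by
  intro a b ha hb
  set z := u (star a * b) with hz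
  set w := u (star b * a) with hw
  have hP := pos a ha
  have hQ := pos b hb
  have h1 := pos (a + b) (by simp [ha, hb])
  have h2 := pos (a + Complex.I • b) (by simp [ha, hb])
  rw [Complex.nonneg_iff] at hP hQ h1 h2
  have e1 : star (a + b) * (a + b) = star a * a + (star a * b + (star b * a + star b * b)) := by
    simp [star_add, add_mul, mul_add]; abel
  have e2 : star (a + Complex.I • b) * (a + Complex.I • b)
      = star a * a + (Complex.I • (star a * b) + ((-Complex.I) • (star b * a) + star b * b)) := by
    simp [star_add, add_mul, mul_add, star_smul, smul_smul, Complex.conj_I, mul_smul_comm,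
      smul_mul_assoc]
    module
  rw [e1] at h1; rw [e2] at h2
  simp only [map_add, map_smul, smul_eq_mul] at h1 h2
  apply Complex.ext
  · have := h2.2
    simp only [Complex.add_im, Complex.mul_im, Complex.I_re, Complex.I_im, Complex.neg_im,
      Complex.neg_re] at this
    rw [← hP.2, ← hQ.2] at this
    simp only [← hz, ← hw, Complex.conj_re] at this ⊢
    linarith
  · have := h1.2
    simp only [Complex.add_im] at this
    rw [← hP.2, ← hQ.2] at this
    simp only [← hz, ← hw, Complex.conj_im] at this ⊢
    linarith

private lemma aux_cs {A : Type*} [CStarAlgebra A]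
    (ε : A →⋆ₐ[ℂ] ℂ) (u : A →L[ℂ] ℂ)
    (pos : ∀ x : A, ε x = 0 → 0 ≤ u (star x * x)) :
    ∀ a b : A, ε a = 0 → ε b = 0 →
      Complex.normSq (u (star a * b)) ≤ (u (star a * a)).re * (u (star b * b)).re := by
  have herm := aux_herm ε u pos
  intro a b ha hb
  set z := u (star a * b) with hz
  set P := (u (star a * a)).re with hP'
  set Q := (u (star b * b)).re with hQ'
  have hP := pos a ha; have hQ := pos b hb
  rw [Complex.nonneg_iff] at hP hQ
  have key : ∀ t : ℝ, 0 ≤ P - 2 * t * Complex.normSq z + t^2 * Complex.normSq z * Q := by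
    intro t
    set c : ℂ := -(t : ℂ) * (starRingEnd ℂ) z with hc
    have h := pos (a + c • b) (by simp [ha, hb])
    have e1 : star (a + c • b) * (a + c • b) = star a * a + (c • (star a * b) +
        ((starRingEnd ℂ) c • (star b * a) + ((starRingEnd ℂ) c * c) • (star b * b))) := by
      simp only [star_add, star_smul, add_mul, mul_add, smul_mul_assoc, mul_smul_comm, smul_smul,
        RCLike.star_def]
      module
    rw [e1] at h
    simp only [map_add, map_smul, smul_eq_mul, ← hz, herm a b ha hb] at h
    rw [Complex.nonneg_iff] at h
    have := h.1
    simp only [Complex.add_re, Complex.mul_re, hc] at this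
    simp only [Complex.normSq_apply, Complex.neg_re, Complex.neg_im, Complex.ofReal_re,
      Complex.ofReal_im, Complex.mul_re, Complex.mul_im, Complex.conj_re, Complex.conj_im,
      ← hP', ← hQ'] at this ⊢
    rw [← hQ.2] at this
    ring_nf at this ⊢
    nlinarith [this]
  rcases eq_or_lt_of_le (Complex.normSq_nonneg z) with h0 | hn
  · rw [← h0]; exact mul_nonneg hP.1 hQ.1
  · have key' : ∀ t : ℝ,
        0 ≤ (Complex.normSq z * Q) * (t * t) + (-2 * Complex.normSq z) * t + P := by
      intro t; have := key t; ring_nf at this ⊢; linarith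
    have hd := discrim_le_zero key'
    rw [discrim] at hd
    nlinarith [hd, hn]

private lemma aux_est {A : Type*} [CStarAlgebra A] [PartialOrder A] [StarOrderedRing A]
    (ε : A →⋆ₐ[ℂ] ℂ) (u : A →L[ℂ] ℂ)
    (pos : ∀ x : A, ε x = 0 → 0 ≤ u (star x * x))
    (y : A) (hy : ε y = 0) (s : ℝ) (hs : 0 < s) :
    ‖u (star y) - (starRingEnd ℂ) (u y)‖ ≤ ‖u‖ * Real.sqrt s ∧
    ‖u y‖ ≤ Real.sqrt (‖u‖ * (u (star y * y)).re) + ‖u‖ * (Real.sqrt s / 2) := by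
  have herm := aux_herm ε u pos
  have cs := aux_cs ε u pos
  set a := star y * y + y * star y with ha_def
  have ha0 : 0 ≤ a := add_nonneg (star_mul_self_nonneg y) (mul_star_self_nonneg y)
  have hsa : IsSelfAdjoint a := .of_nonneg ha0
  have hspec : ∀ t ∈ spectrum ℝ a, 0 ≤ t := fun t ht => spectrum_nonneg_of_nonneg ha0 ht
  set f : ℝ → ℝ := fun t => t * (s + t)⁻¹ with hf_def
  have hst : ∀ t ∈ spectrum ℝ a, s + t ≠ 0 := fun t ht => by
    have := hspec t ht; positivity
  have hf : ContinuousOn f (spectrum ℝ a) :=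
    continuousOn_id.mul (ContinuousOn.inv₀ (by fun_prop) hst)
  have hf1 : ContinuousOn (fun t : ℝ => 1 - f t) (spectrum ℝ a) := by fun_prop
  set e := cfc f a with he_def
  have he_sa : IsSelfAdjoint e := cfc_predicate f a
  have he1_sa : IsSelfAdjoint ((1:A) - e) := by
    rw [IsSelfAdjoint, star_sub, star_one, he_sa.star_eq]
  have he_norm : ‖e‖ ≤ 1 := by
    apply norm_cfc_le zero_le_one
    intro t ht
    have h1 := hspec t ht
    show ‖t * (s + t)⁻¹‖ ≤ 1
    rw [Real.norm_eq_abs, abs_of_nonneg (by positivity), ← div_eq_mul_inv,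
      div_le_one (by positivity)]
    linarith
  have hεa : ε a = 0 := by simp [ha_def, map_star, hy]
  have hεe : ε e = 0 := by
    have h1 : e * (algebraMap ℝ A s + a) = a := by
      have h2 : cfc (fun t : ℝ => s + t) a = algebraMap ℝ A s + a := by
        rw [cfc_const_add s (fun t : ℝ => t) a, cfc_id' ℝ a]
      rw [← h2, he_def, ← cfc_mul f _ a]
      have h3 : (spectrum ℝ a).EqOn (fun t => f t * (s + t)) (fun t => t) := by
        intro t ht
        have := hst t ht
        simp only [hf_def]
        field_simp
      rw [cfc_congr h3, cfc_id' ℝ a]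
    have h4 := congrArg ε h1
    rw [map_mul, map_add, hεa, add_zero] at h4
    have h5 : ε (algebraMap ℝ A s) = (s : ℂ) := by
      rw [IsScalarTower.algebraMap_apply ℝ ℂ A, AlgHomClass.commutes]
      simp
    rw [h5] at h4
    have hs' : (s : ℂ) ≠ 0 := by exact_mod_cast hs.ne'
    exact (mul_eq_zero.mp h4).resolve_right hs'
  have h1e : (1:A) - e = cfc (fun t : ℝ => 1 - f t) a := by
    rw [cfc_sub (fun _ : ℝ => 1) f a (by fun_prop) hf, cfc_const 1 a, map_one]
  have hgnorm : ‖((1:A) - e) * a * ((1:A) - e)‖ ≤ s / 4 := by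
    have hrw : ((1:A) - e) * a * ((1:A) - e)
        = cfc (fun t : ℝ => (1 - f t) * t * (1 - f t)) a := by
      rw [cfc_mul _ _ a (by fun_prop) hf1, cfc_mul _ _ a hf1 (by fun_prop), cfc_id' ℝ a, ← h1e]
    rw [hrw]
    apply norm_cfc_le (by positivity)
    intro t ht
    have h1 := hspec t ht
    have h2 : s + t ≠ 0 := hst t ht
    have h3 : (1 : ℝ) - f t = s * (s + t)⁻¹ := by
      simp only [hf_def]; field_simp; ring
    rw [Real.norm_eq_abs, h3, abs_of_nonneg (by positivity)]
    have h4 : s * (s + t)⁻¹ * t * (s * (s + t)⁻¹) = s * s * t / ((s + t) * (s + t)) := by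
      field_simp
    rw [h4, div_le_iff₀ (by positivity)]
    nlinarith [sq_nonneg (s - t), hs.le, h1]
  have hb : ∀ w : A, w * star w ≤ a → ‖((1:A) - e) * w‖ ≤ Real.sqrt s / 2 := by
    intro w hw
    have h1 : (((1:A) - e) * w) * star (((1:A) - e) * w)
        = ((1:A) - e) * (w * star w) * ((1:A) - e) := by
      rw [star_mul, he1_sa.star_eq]
      noncomm_ring
    have hconj : ((1:A) - e) * (w * star w) * ((1:A) - e) ≤ ((1:A) - e) * a * ((1:A) - e) := by
      have := star_left_conjugate_le_conjugate hw ((1:A) - e)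
      rwa [he1_sa.star_eq] at this
    have hnn : 0 ≤ ((1:A) - e) * (w * star w) * ((1:A) - e) := by
      have := star_left_conjugate_nonneg (mul_star_self_nonneg w) ((1:A) - e)
      rwa [he1_sa.star_eq] at this
    have hn2 : ‖((1:A) - e) * w‖ * ‖((1:A) - e) * w‖ ≤ s / 4 := by
      rw [← CStarRing.norm_self_mul_star, h1]
      exact (CStarAlgebra.norm_le_norm_of_nonneg_of_le hnn hconj).trans hgnorm
    have h5 : ‖((1:A) - e) * w‖ = Real.sqrt (‖((1:A) - e) * w‖ * ‖((1:A) - e) * w‖) :=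
      (Real.sqrt_mul_self (norm_nonneg _)).symm
    rw [h5]
    have h6 : Real.sqrt (s / 4) = Real.sqrt s / 2 := by
      rw [show s / 4 = (Real.sqrt s / 2) ^ 2 by rw [div_pow, Real.sq_sqrt hs.le]; norm_num]
      exact Real.sqrt_sq (by positivity)
    rw [← h6]
    exact Real.sqrt_le_sqrt hn2
  have hwy : ‖((1:A) - e) * y‖ ≤ Real.sqrt s / 2 :=
    hb y (le_add_of_nonneg_left (star_mul_self_nonneg y))
  have E1 : ‖u y - u (e * y)‖ ≤ ‖u‖ * (Real.sqrt s / 2) := by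
    have h1 : u y - u (e * y) = u (((1:A) - e) * y) := by
      rw [← map_sub]; congr 1; noncomm_ring
    rw [h1]
    exact (u.le_opNorm _).trans (by gcongr)
  have E2 : ‖u (star y) - u (star y * e)‖ ≤ ‖u‖ * (Real.sqrt s / 2) := by
    have h1 : u (star y) - u (star y * e) = u (star y * ((1:A) - e)) := by
      rw [← map_sub]; congr 1; noncomm_ring
    have h2 : ‖star y * ((1:A) - e)‖ = ‖((1:A) - e) * y‖ := by
      rw [← norm_star (star y * ((1:A) - e)), star_mul, he1_sa.star_eq, star_star]
    rw [h1]
    exact (u.le_opNorm _).trans (by rw [h2]; gcongr)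
  have E3 : u (star y * e) = (starRingEnd ℂ) (u (e * y)) := by
    have := herm e y hεe hy
    rwa [he_sa.star_eq] at this
  have E4 : ‖u (e * y)‖ ≤ Real.sqrt (‖u‖ * (u (star y * y)).re) := by
    have h1 := cs e y hεe hy
    rw [he_sa.star_eq] at h1
    have hU : 0 ≤ (u (star y * y)).re := ((Complex.nonneg_iff).mp (pos y hy)).1
    have h2 : (u (e * e)).re ≤ ‖u‖ := by
      calc (u (e * e)).re ≤ ‖u (e * e)‖ := Complex.re_le_norm _
        _ = ‖u (e * e)‖ := rfl
        _ ≤ ‖u‖ * ‖e * e‖ := u.le_opNorm _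
        _ ≤ ‖u‖ * 1 := by
            gcongr
            exact (norm_mul_le e e).trans (by nlinarith [norm_nonneg e, he_norm])
        _ = ‖u‖ := mul_one _
    have h3 : Complex.normSq (u (e * y)) ≤ ‖u‖ * (u (star y * y)).re :=
      h1.trans (by gcongr)
    have h4 : ‖u (e * y)‖ ^ 2 ≤ ‖u‖ * (u (star y * y)).re := by
      rwa [← Complex.normSq_eq_norm_sq]
    calc ‖u (e * y)‖ = Real.sqrt (‖u (e * y)‖ ^ 2) := (Real.sqrt_sq (norm_nonneg _)).symm
      _ ≤ _ := Real.sqrt_le_sqrt h4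
  constructor
  · have hsplit : u (star y) - (starRingEnd ℂ) (u y)
        = (u (star y) - u (star y * e))
          + ((starRingEnd ℂ) (u (e * y)) - (starRingEnd ℂ) (u y)) := by
      rw [← E3]; ring
    calc ‖u (star y) - (starRingEnd ℂ) (u y)‖
        = ‖(u (star y) - u (star y * e))
            + ((starRingEnd ℂ) (u (e * y)) - (starRingEnd ℂ) (u y))‖ := by rw [hsplit]
      _ ≤ ‖u (star y) - u (star y * e)‖
            + ‖(starRingEnd ℂ) (u (e * y)) - (starRingEnd ℂ) (u y)‖ := norm_add_le _ _
      _ ≤ ‖u‖ * (Real.sqrt s / 2) + ‖u‖ * (Real.sqrt s / 2) := by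
          refine add_le_add E2 ?_
          rw [← map_sub, RCLike.norm_conj, norm_sub_rev]
          exact E1
      _ = ‖u‖ * Real.sqrt s := by ring
  · calc ‖u y‖ ≤ ‖u (e * y)‖ + ‖u y - u (e * y)‖ := norm_le_insert' (u y) (u (e * y))
      _ ≤ Real.sqrt (‖u‖ * (u (star y * y)).re) + ‖u‖ * (Real.sqrt s / 2) := add_le_add E4 E1

private lemma aux_final {A : Type*} [CStarAlgebra A] [PartialOrder A] [StarOrderedRing A]
    (ε : A →⋆ₐ[ℂ] ℂ) (u : A →L[ℂ] ℂ)
    (pos : ∀ x : A, ε x = 0 → 0 ≤ u (star x * x))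
    (y : A) (hy : ε y = 0) :
    u (star y) = (starRingEnd ℂ) (u y) ∧
      Complex.normSq (u y) ≤ ‖u‖ * (u (star y * y)).re := by
  have hU : 0 ≤ (u (star y * y)).re := ((Complex.nonneg_iff).mp (pos y hy)).1
  constructor
  · have h1 : ‖u (star y) - (starRingEnd ℂ) (u y)‖ ≤ 0 :=
      aux_le_zero_of_le_sqrt fun s hs => (aux_est ε u pos y hy s hs).1
    have h2 : ‖u (star y) - (starRingEnd ℂ) (u y)‖ = 0 := le_antisymm h1 (norm_nonneg _)
    rwa [norm_eq_zero, sub_eq_zero] at h2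
  · have h1 : ‖u y‖ - Real.sqrt (‖u‖ * (u (star y * y)).re) ≤ 0 := by
      apply aux_le_zero_of_le_sqrt (K := ‖u‖ / 2)
      intro s hs
      have := (aux_est ε u pos y hy s hs).2
      linarith [this]
    have h2 : ‖u y‖ ≤ Real.sqrt (‖u‖ * (u (star y * y)).re) := by linarith
    have h3 : ‖u y‖ ^ 2 ≤ ‖u‖ * (u (star y * y)).re := by
      have h4 : (0:ℝ) ≤ ‖u‖ * (u (star y * y)).re := by positivity
      nlinarith [Real.sq_sqrt h4, norm_nonneg (u y)]
    rwa [← Complex.normSq_eq_norm_sq] at h3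

private lemma aux_real (c U zr zi lr li : ℝ) (hc : 0 < c) (hU : 0 ≤ U)
    (hcs : zr ^ 2 + zi ^ 2 ≤ c * U) :
    0 ≤ lr ^ 2 + li ^ 2 + c⁻¹ * (U + 2 * (lr * zr + li * zi)) := by
  have hw : (lr * zr + li * zi) ^ 2 ≤ (lr ^ 2 + li ^ 2) * (zr ^ 2 + zi ^ 2) := by
    nlinarith [sq_nonneg (lr * zi - li * zr)]
  have hS : (0:ℝ) ≤ lr ^ 2 + li ^ 2 := by positivity
  have hw2 : (lr * zr + li * zi) ^ 2 ≤ (lr ^ 2 + li ^ 2) * (c * U) :=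
    hw.trans (by nlinarith [hS, hcs])
  have hkey : 0 ≤ (lr ^ 2 + li ^ 2) * c + U + 2 * (lr * zr + li * zi) := by
    have hK : 0 ≤ (lr ^ 2 + li ^ 2) * c + U := by positivity
    rcases le_or_gt 0 (lr * zr + li * zi) with h | h
    · linarith
    · have h3 : (2 * (lr * zr + li * zi)) ^ 2 ≤ ((lr ^ 2 + li ^ 2) * c + U) ^ 2 := by
        nlinarith [hw2, sq_nonneg ((lr ^ 2 + li ^ 2) * c - U)]
      nlinarith [h3, hK, h]
  have heq : lr ^ 2 + li ^ 2 + c⁻¹ * (U + 2 * (lr * zr + li * zi))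
      = c⁻¹ * ((lr ^ 2 + li ^ 2) * c + U + 2 * (lr * zr + li * zi)) := by
    field_simp
    ring
  rw [heq]
  exact mul_nonneg (inv_nonneg.mpr hc.le) hkey

/-- If `ε` is a character on a unital C*-algebra `A` and `u` is a non-zero bounded linear
functional with `u(1) = 0` which is positive on the kernel of `ε` (i.e. `u(x*x) ≥ 0`
whenever `ε(x*x) = 0`), then `u = r(v − ε)` for some `r > 0` and some state `v` on `A`. -/
theorem conditionally_positive_wrt_character_eq_scaled_state_minus_character
    {A : Type*} [NormedRing A] [StarRing A] [CStarRing A] [NormedAlgebra ℂ A]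
    [CompleteSpace A] [StarModule ℂ A]
    (ε : A →⋆ₐ[ℂ] ℂ) (u : A →L[ℂ] ℂ) (hu : u ≠ 0) (hu1 : u 1 = 0)
    (hcpd : ∀ x : A, ε (star x * x) = 0 → 0 ≤ u (star x * x)) :
    ∃ (r : ℝ) (v : A →L[ℂ] ℂ), 0 < r ∧ (∀ x : A, 0 ≤ v (star x * x)) ∧ v 1 = 1 ∧
      ∀ x : A, u x = r * (v x - ε x) := by
  letI : CStarAlgebra A := { }
  letI : PartialOrder A := CStarAlgebra.spectralOrder A
  haveI : StarOrderedRing A := CStarAlgebra.spectralOrderedRing A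
  have hnt : Nontrivial A := by
    by_contra h
    rw [not_nontrivial_iff_subsingleton] at h
    exact hu (by ext x; simp [Subsingleton.elim x (0:A)])
  have pos : ∀ x : A, ε x = 0 → 0 ≤ u (star x * x) := by
    intro x hx
    exact hcpd x (by rw [map_mul, hx, mul_zero])
  have hεnorm : ∀ x : A, ‖ε x‖ ≤ ‖x‖ := fun x =>
    spectrum.norm_le_norm_of_mem (AlgHom.apply_mem_spectrum ε.toAlgHom x)
  have hc : 0 < ‖u‖ := norm_pos_iff.mpr hu
  set εL : A →L[ℂ] ℂ :=
    LinearMap.mkContinuous ε.toAlgHom.toLinearMap 1 (fun x => by simpa using hεnorm x) with hεL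
  have hεL_apply : ∀ x : A, εL x = ε x := fun x => rfl
  clear_value εL
  refine ⟨‖u‖, εL + ‖u‖⁻¹ • u, hc, ?_, ?_, ?_⟩
  · -- positivity
    intro x
    set lam := ε x with hlam
    set y := x - lam • 1 with hy_def
    have hy : ε y = 0 := by
      simp [hy_def, map_sub, map_smul, map_one, hlam]
    have hx_eq : x = y + lam • 1 := by rw [hy_def]; abel
    clear_value y
    obtain ⟨hherm, hcs⟩ := aux_final ε u pos y hy
    have hU := (Complex.nonneg_iff).mp (pos y hy)
    clear_value lam
    have hexp : star x * x = star y * y + (lam • star y + ((starRingEnd ℂ) lam • y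
        + ((starRingEnd ℂ) lam * lam) • (1:A))) := by
      rw [hx_eq]
      simp only [star_add, star_smul, add_mul, mul_add, smul_mul_assoc, mul_smul_comm, smul_smul,
        RCLike.star_def, mul_one, one_mul, star_one]
      module
    have hux : u (star x * x) = u (star y * y) + (lam * (starRingEnd ℂ) (u y)
        + (starRingEnd ℂ) lam * u y) := by
      rw [hexp]
      simp only [map_add, map_smul, smul_eq_mul, hu1, mul_zero, add_zero, hherm]
    have hεx : ε (star x * x) = (starRingEnd ℂ) lam * lam := by
      rw [map_mul, map_star, RCLike.star_def, ← hlam]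
    have happ : (εL + ‖u‖⁻¹ • u) (star x * x)
        = ((starRingEnd ℂ) lam * lam) + (‖u‖⁻¹ : ℝ) • u (star x * x) := by
      simp only [ContinuousLinearMap.add_apply, ContinuousLinearMap.smul_apply, hεL_apply, hεx]
    rw [happ, hux, Complex.nonneg_iff]
    have hcs' : (u y).re ^ 2 + (u y).im ^ 2 ≤ ‖u‖ * (u (star y * y)).re := by
      rw [Complex.normSq_apply] at hcs
      nlinarith [hcs]
    constructor
    · simp only [Complex.add_re, Complex.mul_re, Complex.mul_im,
        Complex.conj_re, Complex.conj_im, Complex.smul_re, Complex.smul_im, Complex.add_im,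
        smul_eq_mul]
      have h := aux_real ‖u‖ (u (star y * y)).re (u y).re (u y).im lam.re lam.im hc hU.1 hcs'
      ring_nf at h ⊢
      linarith [h]
    · simp only [Complex.add_im, Complex.mul_im, Complex.conj_re, Complex.conj_im,
        Complex.smul_im, Complex.smul_re, smul_eq_mul]
      rw [← hU.2]
      ring
  · -- v 1 = 1
    simp only [ContinuousLinearMap.add_apply, ContinuousLinearMap.smul_apply, hεL_apply,
      map_one, hu1, smul_zero, add_zero]
  · intro x
    simp only [ContinuousLinearMap.add_apply, ContinuousLinearMap.smul_apply, hεL_apply,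
      add_sub_cancel_left]
    rw [Complex.real_smul, ← mul_assoc, ← Complex.ofReal_mul, mul_inv_cancel₀ hc.ne',
      Complex.ofReal_one, one_mul]
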